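/- For α ∈ k with α ≠ 1, the first syzygy of the right Λ(q)-module M(α) is isomorphic to M(qα), i.e. the kernel of the projective cover Λ(q) → M(α) (sending 1 to v) is isomorphic to M(qα). -/

import Mathlib

open FreeAlgebra MulOpposite CategoryTheory

universe u

/-- The defining relations of Ringel–Zhang's algebra `Λ(q)`.
Generators: `0 ↦ x`, `1 ↦ y`, `2 ↦ z`. -/
inductive LambdaRel (k : Type u) [Field k] (q : k) :
    FreeAlgebra k (Fin 3) → FreeAlgebra k (Fin 3) → Prop
  | xx : LambdaRel k q (ι k 0 * ι k 0) 0
  | yy : LambdaRel k q (ι k 1 * ι k 1) 0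
  | zz : LambdaRel k q (ι k 2 * ι k 2) 0
  | zy : LambdaRel k q (ι k 2 * ι k 1) 0
  | yx : LambdaRel k q (ι k 1 * ι k 0 + q • (ι k 0 * ι k 1)) 0
  | zx : LambdaRel k q (ι k 2 * ι k 0 - ι k 0 * ι k 2) 0
  | yz : LambdaRel k q (ι k 1 * ι k 2 - ι k 0 * ι k 2) 0

/-- The algebra `Λ(q) = k⟨x,y,z⟩/(x², y², z², zy, yx+qxy, zx−xz, yz−xz)`. -/
abbrev Lambda (k : Type u) [Field k] (q : k) : Type u := RingQuot (LambdaRel k q)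

variable (k : Type u) [Field k] (q : k)

/-- The image of `x` in `Λ(q)`. -/
noncomputable def Lx : Lambda k q := RingQuot.mkAlgHom k (LambdaRel k q) (ι k 0)
/-- The image of `y` in `Λ(q)`. -/
noncomputable def Ly : Lambda k q := RingQuot.mkAlgHom k (LambdaRel k q) (ι k 1)
/-- The image of `z` in `Λ(q)`. -/
noncomputable def Lz : Lambda k q := RingQuot.mkAlgHom k (LambdaRel k q) (ι k 2)

/-- The data of a right `Λ(q)`-module (a left module over `(Λ(q))ᵐᵒᵖ`) realizing
Ringel–Zhang's module `M(α)`: a `k`-basis `v, v′, v″` (`basis 0, basis 1, basis 2`) with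
`v·x = α v′`, `v·y = v′`, `v·z = v″`, and `v′, v″` annihilated by `x`, `y`, `z`. -/
structure MAlpha (α : k) where
  carrier : Type u
  [acg : AddCommGroup carrier]
  [modk : Module k carrier]
  [modL : Module (Lambda k q)ᵐᵒᵖ carrier]
  [tower : IsScalarTower k (Lambda k q)ᵐᵒᵖ carrier]
  [comm : SMulCommClass k (Lambda k q)ᵐᵒᵖ carrier]
  basis : Module.Basis (Fin 3) k carrier
  hvx : (op (Lx k q)) • basis 0 = α • basis 1
  hvy : (op (Ly k q)) • basis 0 = basis 1
  hvz : (op (Lz k q)) • basis 0 = basis 2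
  hv'x : (op (Lx k q)) • basis 1 = 0
  hv'y : (op (Ly k q)) • basis 1 = 0
  hv'z : (op (Lz k q)) • basis 1 = 0
  hv''x : (op (Lx k q)) • basis 2 = 0
  hv''y : (op (Ly k q)) • basis 2 = 0
  hv''z : (op (Lz k q)) • basis 2 = 0

attribute [instance] MAlpha.acg MAlpha.modk MAlpha.modL MAlpha.tower MAlpha.comm

namespace SyzAux
variable {k : Type u} [Field k] {q : k}

local notation "Λ" => Lambda k q
local notation "mk" => RingQuot.mkAlgHom k (LambdaRel k q)

lemma hxx : Lx k q * Lx k q = 0 := by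
  have := RingQuot.mkAlgHom_rel k (LambdaRel.xx (k := k) (q := q))
  simpa [Lx, map_mul] using this

lemma hyy : Ly k q * Ly k q = 0 := by
  have := RingQuot.mkAlgHom_rel k (LambdaRel.yy (k := k) (q := q))
  simpa [Ly, map_mul] using this

lemma hzz : Lz k q * Lz k q = 0 := by
  have := RingQuot.mkAlgHom_rel k (LambdaRel.zz (k := k) (q := q))
  simpa [Lz, map_mul] using this

lemma hzy : Lz k q * Ly k q = 0 := by
  have := RingQuot.mkAlgHom_rel k (LambdaRel.zy (k := k) (q := q))
  simpa [Lz, Ly, map_mul] using this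

lemma hyx : Ly k q * Lx k q = (-q) • (Lx k q * Ly k q) := by
  have h := RingQuot.mkAlgHom_rel k (LambdaRel.yx (k := k) (q := q))
  simp only [map_add, map_smul, map_mul, map_zero] at h
  have h2 : Ly k q * Lx k q = -(q • (Lx k q * Ly k q)) := by
    rw [eq_neg_iff_add_eq_zero]
    simpa [Lx, Ly] using h
  exact h2.trans (neg_smul q _).symm

lemma hzx : Lz k q * Lx k q = Lx k q * Lz k q := by
  have := RingQuot.mkAlgHom_rel k (LambdaRel.zx (k := k) (q := q))
  simp only [map_sub, map_mul, map_zero, sub_eq_zero] at this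
  simpa [Lx, Lz] using this

lemma hyz : Ly k q * Lz k q = Lx k q * Lz k q := by
  have := RingQuot.mkAlgHom_rel k (LambdaRel.yz (k := k) (q := q))
  simp only [map_sub, map_mul, map_zero, sub_eq_zero] at this
  simpa [Lx, Ly, Lz] using this

end SyzAux
namespace SyzAux
variable (k : Type u) [Field k] (q : k)

/-- `p = xy` in `Λ(q)`. -/
noncomputable def Lp : Lambda k q := Lx k q * Ly k q
/-- `r = xz` in `Λ(q)`. -/
noncomputable def Lr : Lambda k q := Lx k q * Lz k q

variable {k q}

lemma hxp : Lx k q * Lp k q = 0 := by rw [Lp, ← mul_assoc, hxx, zero_mul]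
lemma hxr : Lx k q * Lr k q = 0 := by rw [Lr, ← mul_assoc, hxx, zero_mul]
lemma hyp : Ly k q * Lp k q = 0 := by
  rw [Lp, ← mul_assoc, hyx, smul_mul_assoc, mul_assoc, hyy, mul_zero, smul_zero]
lemma hyr : Ly k q * Lr k q = 0 := by
  rw [Lr, ← mul_assoc, hyx, smul_mul_assoc, mul_assoc, hyz, ← mul_assoc, hxx, zero_mul, smul_zero]
lemma hzp : Lz k q * Lp k q = 0 := by
  rw [Lp, ← mul_assoc, hzx, mul_assoc, hzy, mul_zero]
lemma hzr : Lz k q * Lr k q = 0 := by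
  rw [Lr, ← mul_assoc, hzx, mul_assoc, hzz, mul_zero]
lemma hpx : Lp k q * Lx k q = 0 := by
  rw [Lp, mul_assoc, hyx, mul_smul_comm, ← mul_assoc, hxx, zero_mul, smul_zero]
lemma hpy : Lp k q * Ly k q = 0 := by rw [Lp, mul_assoc, hyy, mul_zero]
lemma hpz : Lp k q * Lz k q = 0 := by
  rw [Lp, mul_assoc, hyz, ← mul_assoc, hxx, zero_mul]
lemma hrx : Lr k q * Lx k q = 0 := by
  rw [Lr, mul_assoc, hzx, ← mul_assoc, hxx, zero_mul]
lemma hry : Lr k q * Ly k q = 0 := by rw [Lr, mul_assoc, hzy, mul_zero]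
lemma hrz : Lr k q * Lz k q = 0 := by rw [Lr, mul_assoc, hzz, mul_zero]
lemma hpp : Lp k q * Lp k q = 0 := by
  have h : Lp k q * Lp k q = Lp k q * Lx k q * Ly k q := (mul_assoc _ _ _).symm
  rw [h, hpx, zero_mul]
lemma hpr : Lp k q * Lr k q = 0 := by
  have h : Lp k q * Lr k q = Lp k q * Lx k q * Lz k q := (mul_assoc _ _ _).symm
  rw [h, hpx, zero_mul]
lemma hrp : Lr k q * Lp k q = 0 := by
  have h : Lr k q * Lp k q = Lr k q * Lx k q * Ly k q := (mul_assoc _ _ _).symm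
  rw [h, hrx, zero_mul]
lemma hrr : Lr k q * Lr k q = 0 := by
  have h : Lr k q * Lr k q = Lr k q * Lx k q * Lz k q := (mul_assoc _ _ _).symm
  rw [h, hrx, zero_mul]

end SyzAux
namespace SyzAux
variable (k : Type u) [Field k] (q : k)

open Matrix in
/-- Left multiplication by `x` on the basis `1,x,y,z,xy,xz` of `Λ(q)`. -/
noncomputable def MX : Matrix (Fin 6) (Fin 6) k :=
  Matrix.single 1 0 1 + Matrix.single 4 2 1 + Matrix.single 5 3 1
open Matrix in
/-- Left multiplication by `y`. -/
noncomputable def MY : Matrix (Fin 6) (Fin 6) k :=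
  Matrix.single 2 0 1 + Matrix.single 4 1 (-q) + Matrix.single 5 3 1
open Matrix in
/-- Left multiplication by `z`. -/
noncomputable def MZ : Matrix (Fin 6) (Fin 6) k :=
  Matrix.single 3 0 1 + Matrix.single 5 1 1

lemma mrel1 : MX k * MX k = 0 ∧ MY k q * MY k q = 0 ∧ MZ k * MZ k = 0 ∧
    MZ k * MY k q = 0 := by
  refine ⟨?_, ?_, ?_, ?_⟩ <;>
    simp [MX, MY, MZ, add_mul, mul_add, Matrix.single_mul_single_of_ne,
      Matrix.single_mul_single_same]

lemma mrel2 : MY k q * MX k + q • (MX k * MY k q) = 0 ∧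
    MZ k * MX k - MX k * MZ k = 0 ∧ MY k q * MZ k - MX k * MZ k = 0 := by
  refine ⟨?_, ?_, ?_⟩ <;>
    simp [MX, MY, MZ, add_mul, mul_add, Matrix.single_mul_single_of_ne,
      Matrix.single_mul_single_same, Matrix.smul_single,
      ← Matrix.single_add, sub_eq_zero]

/-- The left regular representation of `Λ(q)` on its underlying 6-dimensional space. -/
noncomputable def rho : Lambda k q →ₐ[k] Matrix (Fin 6) (Fin 6) k :=
  RingQuot.liftAlgHom k ⟨FreeAlgebra.lift k ![MX k, MY k q, MZ k],
    by
      rintro a b (_|_|_|_|_|_|_) <;>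
        simp only [map_mul, map_add, map_smul, map_sub, map_zero, FreeAlgebra.lift_ι_apply,
          Matrix.cons_val_zero, Matrix.cons_val_one, Matrix.head_cons,
          Matrix.cons_val_two, Matrix.tail_cons]
      · exact (mrel1 k q).1
      · exact (mrel1 k q).2.1
      · exact (mrel1 k q).2.2.1
      · exact (mrel1 k q).2.2.2
      · exact (mrel2 k q).1
      · rw [sub_eq_zero]
        exact sub_eq_zero.mp (mrel2 k q).2.1
      · rw [sub_eq_zero]
        exact sub_eq_zero.mp (mrel2 k q).2.2⟩

lemma rho_x : rho k q (Lx k q) = MX k := by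
  rw [Lx, rho, RingQuot.liftAlgHom_mkAlgHom_apply]
  simp
lemma rho_y : rho k q (Ly k q) = MY k q := by
  rw [Ly, rho, RingQuot.liftAlgHom_mkAlgHom_apply]
  simp
lemma rho_z : rho k q (Lz k q) = MZ k := by
  rw [Lz, rho, RingQuot.liftAlgHom_mkAlgHom_apply]
  simp

end SyzAux
namespace SyzAux
variable (k : Type u) [Field k] (q : k)

/-- `w = x - α y` in `Λ(q)` (written with `+ (-α) •` to ease rewriting). -/
noncomputable def Lw (α : k) : Lambda k q := Lx k q + (-α) • Ly k q

variable {k q}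

lemma hwx (α : k) : Lw k q α * Lx k q = (q * α) • Lp k q := by
  rw [Lw, add_mul, hxx, smul_mul_assoc, hyx, smul_smul, zero_add, Lp]
  ring_nf
lemma hwy (α : k) : Lw k q α * Ly k q = Lp k q := by
  rw [Lw, add_mul, smul_mul_assoc, hyy, smul_zero, add_zero, Lp]
lemma hwz (α : k) : Lw k q α * Lz k q = (1 - α) • Lr k q := by
  rw [Lw, add_mul, smul_mul_assoc, hyz, Lr]
  module

lemma rho_w (α : k) : rho k q (Lw k q α) = MX k + (-α) • MY k q := by
  rw [Lw, map_add, map_smul, rho_x, rho_y]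
lemma rho_p : rho k q (Lp k q) = Matrix.single 4 0 1 := by
  rw [Lp, map_mul, rho_x, rho_y, MX, MY]
  simp [add_mul, mul_add, Matrix.single_mul_single_of_ne, Matrix.single_mul_single_same]
lemma rho_r : rho k q (Lr k q) = Matrix.single 5 0 1 := by
  rw [Lr, map_mul, rho_x, rho_z, MX, MZ]
  simp [add_mul, mul_add, Matrix.single_mul_single_of_ne, Matrix.single_mul_single_same]

lemma indep {α a b c : k}
    (h : a • Lw k q α + b • Lp k q + c • Lr k q = 0) : a = 0 ∧ b = 0 ∧ c = 0 := by
  have h2 := congrArg (rho k q) h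
  rw [map_add, map_add, map_smul, map_smul, map_smul, map_zero, rho_w, rho_p, rho_r] at h2
  have e1 := congrFun (congrFun h2 1) 0
  have e4 := congrFun (congrFun h2 4) 0
  have e5 := congrFun (congrFun h2 5) 0
  simp [MX, MY, Matrix.add_apply, Matrix.smul_apply, Matrix.single_apply_same,
    Matrix.single_apply_of_ne, Matrix.zero_apply] at e1 e4 e5
  exact ⟨e1, e4, e5⟩

end SyzAux
namespace SyzAux
variable (k : Type u) [Field k] (q : k)

theorem cons_val_five {m : ℕ} {α : Type*} (x : α) (u : Fin (m+5) → α) :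
    Matrix.vecCons x u 5 =
      Matrix.vecHead (Matrix.vecTail (Matrix.vecTail (Matrix.vecTail (Matrix.vecTail u)))) :=
  rfl

/-- The spanning family `1, x, y, z, xy, xz` of `Λ(q)`. -/
noncomputable def sfam : Fin 6 → Lambda k q := ![1, Lx k q, Ly k q, Lz k q, Lp k q, Lr k q]

/-- The span of the six monomials. -/
noncomputable def Tspan : Submodule k (Lambda k q) := Submodule.span k (Set.range (sfam k q))

variable {k q}

lemma sfam_mem (i : Fin 6) : sfam k q i ∈ Tspan k q :=
  Submodule.subset_span (Set.mem_range_self i)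

lemma mul_mem_Tspan {a b : Lambda k q} (ha : a ∈ Tspan k q) (hb : b ∈ Tspan k q) :
    a * b ∈ Tspan k q := by
  induction ha using Submodule.span_induction with
  | mem x hx =>
    induction hb using Submodule.span_induction with
    | mem y hy =>
      obtain ⟨i, rfl⟩ := hx
      obtain ⟨j, rfl⟩ := hy
      have hT := sfam_mem (k := k) (q := q)
      fin_cases i <;> fin_cases j <;>
        simp only [Fin.mk_zero, Fin.mk_one, Fin.reduceFinMk, sfam, Matrix.cons_val_succ, Matrix.cons_val_zero, Matrix.cons_val_one, Matrix.head_cons,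
          Matrix.cons_val_two, Matrix.tail_cons, Matrix.cons_val_three, Matrix.cons_val_four,
          cons_val_five, Matrix.vecHead, Matrix.vecTail, Function.comp_apply, Fin.isValue,
          one_mul, mul_one, hxx, hyy, hzz, hzy, hyx, hzx, hyz, hxp, hxr, hyp, hyr, hzp, hzr,
          hpx, hpy, hpz, hrx, hry, hrz, hpp, hpr, hrp, hrr] <;>
        first
          | exact zero_mem _
          | exact hT 0
          | exact hT 1
          | exact hT 2
          | exact hT 3
          | exact hT 4
          | exact hT 5
          | exact Submodule.smul_mem _ _ (hT 4)
    | zero => simpa using zero_mem (Tspan k q)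
    | add y z _ _ iy iz => simpa [mul_add] using add_mem iy iz
    | smul c y _ iy => simpa [mul_smul_comm] using Submodule.smul_mem _ c iy
  | zero => simpa using zero_mem (Tspan k q)
  | add x y _ _ ix iy => simpa [add_mul] using add_mem ix iy
  | smul c x _ ix => simpa [smul_mul_assoc] using Submodule.smul_mem _ c ix

lemma mem_Tspan (s : Lambda k q) : s ∈ Tspan k q := by
  obtain ⟨t, rfl⟩ := RingQuot.mkAlgHom_surjective k (LambdaRel k q) s
  induction t using FreeAlgebra.induction with
  | grade0 c =>
    have : (RingQuot.mkAlgHom k (LambdaRel k q)) (algebraMap k _ c) = c • (1 : Lambda k q) := by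
      rw [AlgHom.commutes, Algebra.algebraMap_eq_smul_one]
    rw [this]
    exact Submodule.smul_mem _ c (sfam_mem 0)
  | grade1 x =>
    fin_cases x
    · exact sfam_mem 1
    · exact sfam_mem 2
    · exact sfam_mem 3
  | mul a b ia ib => rw [map_mul]; exact mul_mem_Tspan ia ib
  | add a b ia ib => rw [map_add]; exact add_mem ia ib

end SyzAux
namespace SyzAux
variable {k : Type u} [Field k] {q : k}

/-- Targets of the map `M(qα) → Λ`: `v ↦ w`, `v′ ↦ xy`, `v″ ↦ (1-α) xz`. -/
noncomputable def tgt (q : k) (α : k) : Fin 3 → (Lambda k q)ᵐᵒᵖ :=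
  ![op (Lw k q α), op (Lp k q), (1 - α) • op (Lr k q)]

/-- The `k`-linear map `M(qα) → Λᵐᵒᵖ`. -/
noncomputable def phi0 (α : k) (M' : MAlpha k q (q * α)) :
    M'.carrier →ₗ[k] (Lambda k q)ᵐᵒᵖ :=
  M'.basis.constr k (tgt q α)

variable {α : k} (M' : MAlpha k q (q * α))

lemma phi0_b0 : phi0 α M' (M'.basis 0) = op (Lw k q α) := by
  rw [phi0, Module.Basis.constr_basis]; simp [tgt]
lemma phi0_b1 : phi0 α M' (M'.basis 1) = op (Lp k q) := by
  rw [phi0, Module.Basis.constr_basis]; simp [tgt]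
lemma phi0_b2 : phi0 α M' (M'.basis 2) = (1 - α) • op (Lr k q) := by
  rw [phi0, Module.Basis.constr_basis]; simp [tgt]

lemma op_smul_op (a b : Lambda k q) : op a • op b = op (b * a) := by
  rw [smul_eq_mul, ← MulOpposite.op_mul]

lemma key_gen (s : Lambda k q)
    (h0 : phi0 α M' (op s • M'.basis 0) = op s • phi0 α M' (M'.basis 0))
    (h1 : phi0 α M' (op s • M'.basis 1) = op s • phi0 α M' (M'.basis 1))
    (h2 : phi0 α M' (op s • M'.basis 2) = op s • phi0 α M' (M'.basis 2))
    (m : M'.carrier) :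
    phi0 α M' (op s • m) = op s • phi0 α M' m := by
  haveI i1 : SMulCommClass (Lambda k q)ᵐᵒᵖ k M'.carrier := SMulCommClass.symm _ _ _
  haveI i2 : SMulCommClass (Lambda k q)ᵐᵒᵖ k (Lambda k q)ᵐᵒᵖ := SMulCommClass.symm _ _ _
  have heq : (phi0 α M').comp (DistribSMul.toLinearMap k M'.carrier (op s)) =
      (DistribSMul.toLinearMap k (Lambda k q)ᵐᵒᵖ (op s)).comp (phi0 α M') := by
    apply M'.basis.ext
    intro i
    fin_cases i
    · simpa using h0
    · simpa using h1
    · simpa using h2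
  simpa using LinearMap.congr_fun heq m

lemma key (s : Lambda k q) (m : M'.carrier) :
    phi0 α M' (op s • m) = op s • phi0 α M' m := by
  haveI i1 : SMulCommClass (Lambda k q)ᵐᵒᵖ k M'.carrier := SMulCommClass.symm _ _ _
  haveI i2 : SMulCommClass (Lambda k q)ᵐᵒᵖ k (Lambda k q)ᵐᵒᵖ := SMulCommClass.symm _ _ _
  suffices h : ∀ t : FreeAlgebra k (Fin 3), ∀ m : M'.carrier,
      phi0 α M' (op (RingQuot.mkAlgHom k (LambdaRel k q) t) • m) =
        op (RingQuot.mkAlgHom k (LambdaRel k q) t) • phi0 α M' m by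
    obtain ⟨t, rfl⟩ := RingQuot.mkAlgHom_surjective k (LambdaRel k q) s
    exact h t m
  intro t
  induction t using FreeAlgebra.induction with
  | grade0 c =>
    intro m
    rw [AlgHom.commutes]
    have e1 : (op (algebraMap k (Lambda k q) c) : (Lambda k q)ᵐᵒᵖ) =
        algebraMap k (Lambda k q)ᵐᵒᵖ c := rfl
    rw [e1, algebraMap_smul, algebraMap_smul, map_smul]
  | grade1 x =>
    have gx : ∀ m : M'.carrier, phi0 α M' (op (Lx k q) • m) = op (Lx k q) • phi0 α M' m := by
      refine fun m => key_gen M' _ ?_ ?_ ?_ m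
      · rw [M'.hvx, map_smul, phi0_b0, phi0_b1, op_smul_op, hwx, MulOpposite.op_smul]
      · rw [M'.hv'x, map_zero, phi0_b1, op_smul_op, hpx, MulOpposite.op_zero]
      · rw [M'.hv''x, map_zero, phi0_b2, smul_comm, op_smul_op, hrx, MulOpposite.op_zero,
          smul_zero]
    have gy : ∀ m : M'.carrier, phi0 α M' (op (Ly k q) • m) = op (Ly k q) • phi0 α M' m := by
      refine fun m => key_gen M' _ ?_ ?_ ?_ m
      · rw [M'.hvy, phi0_b0, phi0_b1, op_smul_op, hwy]
      · rw [M'.hv'y, map_zero, phi0_b1, op_smul_op, hpy, MulOpposite.op_zero]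
      · rw [M'.hv''y, map_zero, phi0_b2, smul_comm, op_smul_op, hry, MulOpposite.op_zero,
          smul_zero]
    have gz : ∀ m : M'.carrier, phi0 α M' (op (Lz k q) • m) = op (Lz k q) • phi0 α M' m := by
      refine fun m => key_gen M' _ ?_ ?_ ?_ m
      · rw [M'.hvz, phi0_b0, phi0_b2, op_smul_op, hwz, MulOpposite.op_smul]
      · rw [M'.hv'z, map_zero, phi0_b1, op_smul_op, hpz, MulOpposite.op_zero]
      · rw [M'.hv''z, map_zero, phi0_b2, smul_comm, op_smul_op, hrz, MulOpposite.op_zero,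
          smul_zero]
    fin_cases x
    · exact gx
    · exact gy
    · exact gz
  | mul a b iha ihb =>
    intro m
    rw [map_mul]
    have e1 : (op (RingQuot.mkAlgHom k (LambdaRel k q) a *
        RingQuot.mkAlgHom k (LambdaRel k q) b) : (Lambda k q)ᵐᵒᵖ) =
        op (RingQuot.mkAlgHom k (LambdaRel k q) b) * op (RingQuot.mkAlgHom k (LambdaRel k q) a) :=
      rfl
    rw [e1, mul_smul, mul_smul, ihb, iha]
  | add a b iha ihb =>
    intro m
    rw [map_add]
    have e1 : (op (RingQuot.mkAlgHom k (LambdaRel k q) a +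
        RingQuot.mkAlgHom k (LambdaRel k q) b) : (Lambda k q)ᵐᵒᵖ) =
        op (RingQuot.mkAlgHom k (LambdaRel k q) a) + op (RingQuot.mkAlgHom k (LambdaRel k q) b) :=
      rfl
    rw [e1, add_smul, add_smul, map_add, iha, ihb]

end SyzAux
namespace SyzAux
variable {k : Type u} [Field k] {q : k}

lemma sfam0 : sfam k q 0 = 1 := rfl
lemma sfam1 : sfam k q 1 = Lx k q := rfl
lemma sfam2 : sfam k q 2 = Ly k q := rfl
lemma sfam3 : sfam k q 3 = Lz k q := rfl
lemma sfam4 : sfam k q 4 = Lp k q := rfl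
lemma sfam5 : sfam k q 5 = Lr k q := rfl

variable {β : k} (N : MAlpha k q β)

lemma act_w (α : k) : op (Lw k q α) • N.basis 0 = (β + -α) • N.basis 1 := by
  have e : (op (Lw k q α) : (Lambda k q)ᵐᵒᵖ) = op (Lx k q) + (-α) • op (Ly k q) := by
    rw [Lw, MulOpposite.op_add, MulOpposite.op_smul]
  rw [e, add_smul, smul_assoc, N.hvx, N.hvy, ← add_smul]

lemma act_p : op (Lp k q) • N.basis 0 = 0 := by
  haveI : SMulCommClass (Lambda k q)ᵐᵒᵖ k N.carrier := SMulCommClass.symm _ _ _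
  have e : (op (Lp k q) : (Lambda k q)ᵐᵒᵖ) = op (Ly k q) * op (Lx k q) := rfl
  rw [e, mul_smul, N.hvx, smul_comm, N.hv'y, smul_zero]

lemma act_r : op (Lr k q) • N.basis 0 = 0 := by
  haveI : SMulCommClass (Lambda k q)ᵐᵒᵖ k N.carrier := SMulCommClass.symm _ _ _
  have e : (op (Lr k q) : (Lambda k q)ᵐᵒᵖ) = op (Lz k q) * op (Lx k q) := rfl
  rw [e, mul_smul, N.hvx, smul_comm, N.hv'z, smul_zero]

end SyzAux

open SyzAux


/-- for `α ≠ 1`, the first syzygy of `M(α)` is `M(qα)`: the kernel of the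
projective cover `Λ(q) → M(α)`, `1 ↦ v`, is isomorphic to `M(qα)` as a right
`Λ(q)`-module. -/
theorem syzygy_malpha (hq : ∀ n : ℕ, 0 < n → q ^ n ≠ 1) {α : k} (hα : α ≠ 1)
    (M : MAlpha k q α) (M' : MAlpha k q (q * α)) :
    Nonempty
      (LinearMap.ker
          (LinearMap.toSpanSingleton (Lambda k q)ᵐᵒᵖ M.carrier (M.basis 0)) ≃ₗ[(Lambda k q)ᵐᵒᵖ]
        M'.carrier) := by
  classical
  haveI i1 : SMulCommClass (Lambda k q)ᵐᵒᵖ k M.carrier := SMulCommClass.symm _ _ _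
  haveI i2 : SMulCommClass (Lambda k q)ᵐᵒᵖ k M'.carrier := SMulCommClass.symm _ _ _
  set π := LinearMap.toSpanSingleton (Lambda k q)ᵐᵒᵖ M.carrier (M.basis 0) with hπdef
  have hα1 : (1 : k) - α ≠ 0 := sub_ne_zero.mpr (Ne.symm hα)
  -- the Λᵐᵒᵖ-linear map φ
  let φ : M'.carrier →ₗ[(Lambda k q)ᵐᵒᵖ] (Lambda k q)ᵐᵒᵖ :=
    { toFun := phi0 α M'
      map_add' := fun a b => map_add _ a b
      map_smul' := fun r m => by
        have h := SyzAux.key M' r.unop m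
        simpa [MulOpposite.op_unop] using h }
  have φ_apply : ∀ m, φ m = phi0 α M' m := fun _ => rfl
  -- φ lands in the kernel of π
  have hker : ∀ m : M'.carrier, φ m ∈ LinearMap.ker π := by
    have hcomp : (π.restrictScalars k).comp (phi0 α M') = 0 := by
      apply M'.basis.ext
      intro i
      fin_cases i
      · have e := phi0_b0 M'
        simp only [LinearMap.comp_apply, LinearMap.restrictScalars_apply, LinearMap.zero_apply]
        rw [show M'.basis ⟨0, by norm_num⟩ = M'.basis 0 from rfl, e, hπdef,
          LinearMap.toSpanSingleton_apply, act_w M α]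
        simp
      · have e := phi0_b1 M'
        simp only [LinearMap.comp_apply, LinearMap.restrictScalars_apply, LinearMap.zero_apply]
        rw [show M'.basis ⟨1, by norm_num⟩ = M'.basis 1 from rfl, e, hπdef,
          LinearMap.toSpanSingleton_apply, act_p M]
      · have e := phi0_b2 M'
        simp only [LinearMap.comp_apply, LinearMap.restrictScalars_apply, LinearMap.zero_apply]
        rw [show M'.basis ⟨2, by norm_num⟩ = M'.basis 2 from rfl, e, hπdef,
          LinearMap.toSpanSingleton_apply, smul_assoc, act_r M, smul_zero]
    intro m
    rw [LinearMap.mem_ker]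
    have := LinearMap.congr_fun hcomp m
    simpa [φ_apply] using this
  -- injectivity
  have hinj : Function.Injective (phi0 α M') := by
    have hz : ∀ m, phi0 α M' m = 0 → m = 0 := by
      intro m hm
      rw [phi0, Module.Basis.constr_apply_fintype, Fin.sum_univ_three] at hm
      have ht0 : tgt q α 0 = op (Lw k q α) := rfl
      have ht1 : tgt q α 1 = op (Lp k q) := rfl
      have ht2 : tgt q α 2 = (1 - α) • op (Lr k q) := rfl
      rw [ht0, ht1, ht2] at hm
      have hm2 := congrArg MulOpposite.unop hm
      simp only [MulOpposite.unop_add, MulOpposite.unop_smul, MulOpposite.unop_op,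
        MulOpposite.unop_zero] at hm2
      rw [smul_smul] at hm2
      have hind := indep (q := q) (α := α) (a := M'.basis.equivFun m 0)
        (b := M'.basis.equivFun m 1) (c := M'.basis.equivFun m 2 * (1 - α)) hm2
      have e2 : M'.basis.equivFun m 2 = 0 := by
        rcases mul_eq_zero.mp hind.2.2 with h | h
        · exact h
        · exact absurd h hα1
      have : M'.basis.equivFun m = 0 := by
        funext i
        fin_cases i
        · exact hind.1
        · exact hind.2.1
        · exact e2
      exact (LinearEquiv.map_eq_zero_iff M'.basis.equivFun).mp this
    intro a b hab
    have := hz (a - b) (by rw [map_sub, hab, sub_self])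
    exact sub_eq_zero.mp this
  -- surjectivity onto the kernel
  have hsurj : ∀ u : (Lambda k q)ᵐᵒᵖ, u ∈ LinearMap.ker π → ∃ m, phi0 α M' m = u := by
    intro u hu
    obtain ⟨c, hc⟩ := (Submodule.mem_span_range_iff_exists_fun k).mp (mem_Tspan (MulOpposite.unop u))
    have hb : (op (MulOpposite.unop u) : (Lambda k q)ᵐᵒᵖ) • M.basis 0 = 0 := by
      rw [MulOpposite.op_unop]
      rw [LinearMap.mem_ker, hπdef, LinearMap.toSpanSingleton_apply] at hu
      exact hu
    rw [← hc, Fin.sum_univ_six, sfam0, sfam1, sfam2, sfam3, sfam4, sfam5] at hb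
    simp only [MulOpposite.op_add, MulOpposite.op_smul, add_smul, smul_assoc] at hb
    rw [M.hvx, M.hvy, M.hvz, act_p M, act_r M, MulOpposite.op_one, one_smul] at hb
    have h6 : c 0 • M.basis 0 + (c 1 * α + c 2) • M.basis 1 + c 3 • M.basis 2 = 0 := by
      rw [← hb]
      module
    have hli := Fintype.linearIndependent_iff.mp M.basis.linearIndependent
      ![c 0, c 1 * α + c 2, c 3] (by rw [Fin.sum_univ_three]; simpa using h6)
    have hc0 : c 0 = 0 := by simpa using hli 0
    have hc1 : c 1 * α + c 2 = 0 := by simpa using hli 1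
    have hc3 : c 3 = 0 := by simpa using hli 2
    have hc2 : c 2 = -(c 1 * α) := eq_neg_of_add_eq_zero_right hc1
    refine ⟨c 1 • M'.basis 0 + c 4 • M'.basis 1 + (c 5 / (1 - α)) • M'.basis 2, ?_⟩
    apply MulOpposite.unop_injective
    rw [map_add, map_add, map_smul, map_smul, map_smul, phi0_b0, phi0_b1, phi0_b2]
    rw [smul_smul, div_mul_cancel₀ _ hα1]
    simp only [MulOpposite.unop_add, MulOpposite.unop_smul, MulOpposite.unop_op]
    rw [← hc, Fin.sum_univ_six, sfam0, sfam1, sfam2, sfam3, sfam4, sfam5, hc0, hc2, hc3, Lw]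
    module
  -- assemble the isomorphism
  let φres := LinearMap.codRestrict (LinearMap.ker π) φ hker
  have hbij : Function.Bijective φres := by
    constructor
    · intro a b hab
      exact hinj (congrArg Subtype.val hab)
    · rintro ⟨u, hu⟩
      obtain ⟨m, hm⟩ := hsurj u hu
      exact ⟨m, Subtype.ext hm⟩
  exact ⟨(LinearEquiv.ofBijective φres hbij).symm⟩
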